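/- Let M be a compact metric space, F : M ⊸ M an usc set-valued map, and σ_F the one-sided shift on M^F = {(x_i)_{i∈ℕ} : x_{i+1} ∈ F(x_i)} with metric ρ((x_n),(y_n)) = Σ_{j≥0} dist(x_j,y_j)/2^j. Then the topological entropy of σ_F is at least the topological entropy of F: h_top(σ_F) ≥ h_top(F). -/

import Mathlib

open Metric Filter

/-- Orbit segments of length `n` of a set-valued map `F`. -/
def Seg {M : Type*} (F : M → Set M) (n : ℕ) : Set (Fin n → M) :=
  {x | ∀ i : Fin n, ∀ h : (i : ℕ) + 1 < n, x ⟨(i : ℕ) + 1, h⟩ ∈ F (x i)}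

/-- `s_n(ε)` for `F`: maximal cardinality of an `(n,ε)`-separated set of orbit
segments. -/
noncomputable def sSep {M : Type*} [MetricSpace M] (F : M → Set M) (n : ℕ) (ε : ℝ) : ℕ :=
  sSup {m : ℕ | ∃ A : Set (Fin n → M), A.Finite ∧ A ⊆ Seg F n ∧
    (A.Pairwise fun x y => ∃ i : Fin n, ε < dist (x i) (y i)) ∧ A.ncard = m}

/-- The one-sided sub-orbit space `M^F`. -/
def MF {M : Type*} (F : M → Set M) : Set (ℕ → M) :=
  {x | ∀ i : ℕ, x (i + 1) ∈ F (x i)}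

/-- The metric `ρ` on sequences. -/
noncomputable def rho {M : Type*} [MetricSpace M] (x y : ℕ → M) : ℝ :=
  ∑' j : ℕ, dist (x j) (y j) / 2 ^ j

/-- The one-sided shift on sequences. -/
def shiftSeq {M : Type*} (x : ℕ → M) : ℕ → M := fun i => x (i + 1)

/-- Bowen `(n,ε)`-separated cardinality for the shift `σ_F` on `(M^F, ρ)`. -/
noncomputable def sSepShift {M : Type*} [MetricSpace M] (F : M → Set M) (n : ℕ)
    (ε : ℝ) : ℕ :=
  sSup {m : ℕ | ∃ A : Set (ℕ → M), A.Finite ∧ A ⊆ MF F ∧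
    (A.Pairwise fun x y => ∃ j < n, ε < rho (shiftSeq^[j] x) (shiftSeq^[j] y)) ∧
    A.ncard = m}

section Aux

set_option maxHeartbeats 1000000

lemma shift_iter {M : Type*} (x : ℕ → M) (j i : ℕ) : (shiftSeq^[j] x) i = x (i + j) := by
  induction j generalizing x with
  | zero => rfl
  | succ j ih =>
      rw [Function.iterate_succ_apply, ih]
      simp [shiftSeq, Nat.add_assoc, Nat.add_comm 1 j]

/-- Extension of an orbit segment to a full orbit, using choice. -/
noncomputable def extSeq {M : Type*} (F : M → Set M) (hne : ∀ x, (F x).Nonempty)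
    {n : ℕ} (x : Fin n → M) (d : M) : ℕ → M
  | 0 => if h : 0 < n then x ⟨0, h⟩ else d
  | (i+1) => if h : i + 1 < n then x ⟨i+1, h⟩ else (hne (extSeq F hne x d i)).some

lemma extSeq_lt {M : Type*} (F : M → Set M) (hne : ∀ x, (F x).Nonempty)
    {n : ℕ} (x : Fin n → M) (d : M) (i : ℕ) (h : i < n) :
    extSeq F hne x d i = x ⟨i, h⟩ := by
  cases i <;> simp [extSeq, h]

lemma extSeq_mem {M : Type*} (F : M → Set M) (hne : ∀ x, (F x).Nonempty)
    {n : ℕ} (x : Fin n → M) (d : M) (hx : x ∈ Seg F n) :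
    extSeq F hne x d ∈ MF F := by
  intro i
  by_cases h : i + 1 < n
  · have hi : i < n := Nat.lt_of_succ_lt h
    rw [extSeq_lt F hne x d i hi]
    have := hx ⟨i, hi⟩ h
    simpa [extSeq, h] using this
  · simp only [extSeq, h, dif_neg, not_false_iff]
    exact (hne _).some_mem

lemma geom_summable (c : ℝ) : Summable (fun j : ℕ => c / 2 ^ j) := by
  have h : Summable (fun j : ℕ => c * (1/2 : ℝ)^j) := summable_geometric_two.mul_left c
  refine h.congr fun j => ?_
  rw [div_pow, one_pow, mul_one_div]

lemma summable_rho {M : Type*} [MetricSpace M] (C : ℝ)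
    (hC : ∀ a b : M, dist a b ≤ C) (x y : ℕ → M) :
    Summable (fun j : ℕ => dist (x j) (y j) / 2 ^ j) := by
  refine Summable.of_nonneg_of_le (fun j => by positivity) (fun j => ?_) (geom_summable C)
  exact div_le_div_of_nonneg_right (hC _ _) (by positivity)

lemma dist_le_rho {M : Type*} [MetricSpace M] (C : ℝ)
    (hC : ∀ a b : M, dist a b ≤ C) (x y : ℕ → M) :
    dist (x 0) (y 0) ≤ rho x y := by
  have h := Summable.le_tsum (summable_rho C hC x y) 0 (fun j _ => by positivity)
  simpa [rho] using h

lemma rho_le_sum {M : Type*} [MetricSpace M] (C : ℝ)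
    (hC : ∀ a b : M, dist a b ≤ C) (K : ℕ) (x y : ℕ → M) :
    rho x y ≤ (∑ k ∈ Finset.range K, dist (x k) (y k) / 2 ^ k) + C / 2 ^ K * 2 := by
  have hsum := summable_rho C hC x y
  rw [rho, ← Summable.sum_add_tsum_nat_add K hsum]
  gcongr
  have h2 : Summable (fun k : ℕ => C / 2 ^ K / 2 ^ k) := geom_summable _
  have h3 : (∑' k : ℕ, dist (x (k + K)) (y (k + K)) / 2 ^ (k + K))
      ≤ ∑' k : ℕ, C / 2 ^ K / 2 ^ k := by
    refine Summable.tsum_le_tsum (fun k => ?_) ((summable_nat_add_iff K).2 hsum) h2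
    have e : (2:ℝ) ^ (k + K) = 2 ^ K * 2 ^ k := by rw [pow_add]; ring
    rw [e, ← div_div]
    refine div_le_div_of_nonneg_right ?_ (by positivity)
    exact div_le_div_of_nonneg_right (hC _ _) (by positivity)
  refine h3.trans (le_of_eq ?_)
  have h4 : (fun k : ℕ => C / 2 ^ K / 2 ^ k) = fun k : ℕ => (C / 2 ^ K) * (1/2 : ℝ)^k := by
    funext k; rw [div_pow, one_pow, mul_one_div]
  rw [h4, tsum_mul_left, tsum_geometric_two]

lemma exists_dist_bound (M : Type*) [MetricSpace M] [CompactSpace M] :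
    ∃ D : ℝ, 0 ≤ D ∧ ∀ a b : M, dist a b ≤ D := by
  obtain ⟨C, hC⟩ := Metric.isBounded_iff.1 (isCompact_univ (X := M)).isBounded
  exact ⟨max C 0, le_max_right _ _,
    fun a b => le_max_of_le_left (hC (Set.mem_univ a) (Set.mem_univ b))⟩

lemma bddAbove_S2 {M : Type*} [MetricSpace M] [CompactSpace M] (F : M → Set M)
    (n : ℕ) (ε : ℝ) (hε : 0 < ε) :
    BddAbove {m : ℕ | ∃ A : Set (ℕ → M), A.Finite ∧ A ⊆ MF F ∧
      (A.Pairwise fun x y => ∃ j < n, ε < rho (shiftSeq^[j] x) (shiftSeq^[j] y)) ∧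
      A.ncard = m} := by
  obtain ⟨D, hD0, hD⟩ := exists_dist_bound M
  obtain ⟨K, hK⟩ := exists_pow_lt_of_lt_one
    (show (0:ℝ) < ε / (2 * (2 * D + 1)) by positivity) (by norm_num : (1/2:ℝ) < 1)
  have hKtail : D / 2 ^ K * 2 ≤ ε / 2 := by
    have h1 : (1/2 : ℝ) ^ K = 1 / 2 ^ K := by rw [div_pow, one_pow]
    rw [h1] at hK
    have h2 : (0:ℝ) < 2 ^ K := by positivity
    rw [div_lt_div_iff₀ h2 (by positivity)] at hK
    rw [div_mul_eq_mul_div, div_le_div_iff₀ h2 (by norm_num)]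
    nlinarith
  obtain ⟨t, htf, htc⟩ := totallyBounded_iff.1 (isCompact_univ (X := M)).totallyBounded
    (ε/8) (by positivity)
  have hcen : ∀ z : M, ∃ c ∈ t, dist z c < ε/8 := by
    intro z
    have := htc (Set.mem_univ z)
    simp only [Set.mem_iUnion, mem_ball] at this
    obtain ⟨c, hc1, hc2⟩ := this
    exact ⟨c, hc1, hc2⟩
  choose cen hcent hcend using hcen
  set T : Set (Fin (n + K) → M) := Set.pi Set.univ (fun _ => t) with hT
  have hTfin : T.Finite := Set.Finite.pi (fun _ => htf)
  rw [bddAbove_def]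
  refine ⟨T.ncard, fun m hm => ?_⟩
  obtain ⟨A, hAf, hAMF, hApair, rfl⟩ := hm
  set φ : (ℕ → M) → (Fin (n + K) → M) := fun x i => cen (x i) with hφ
  have hinj : Set.InjOn φ A := by
    intro x hx y hy hxy
    by_contra hne
    obtain ⟨j, hj, hrho⟩ := hApair hx hy hne
    have hclose : ∀ m : ℕ, m < n + K → dist (x m) (y m) ≤ ε/4 := by
      intro m hm
      have hc : cen (x m) = cen (y m) := congrFun hxy ⟨m, hm⟩
      calc dist (x m) (y m) ≤ dist (x m) (cen (x m)) + dist (cen (x m)) (y m) :=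
            dist_triangle _ _ _
        _ ≤ ε/8 + ε/8 :=
            add_le_add (hcend _).le (by rw [hc, dist_comm]; exact (hcend _).le)
        _ = ε/4 := by ring
    have hb := rho_le_sum D hD K (shiftSeq^[j] x) (shiftSeq^[j] y)
    have hsumle : (∑ k ∈ Finset.range K, dist ((shiftSeq^[j] x) k) ((shiftSeq^[j] y) k) / 2 ^ k)
        ≤ ε / 2 := by
      have h5 : ∀ k ∈ Finset.range K,
          dist ((shiftSeq^[j] x) k) ((shiftSeq^[j] y) k) / 2 ^ k ≤ (ε/4) * (1/2:ℝ)^k := by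
        intro k hk
        rw [shift_iter, shift_iter]
        have hm : k + j < n + K := by
          have := Finset.mem_range.1 hk; omega
        have h6 : (ε/4) * (1/2:ℝ)^k = (ε/4) / 2^k := by
          rw [div_pow, one_pow, mul_one_div]
        rw [h6]
        exact div_le_div_of_nonneg_right (hclose _ hm) (by positivity)
      calc (∑ k ∈ Finset.range K, dist ((shiftSeq^[j] x) k) ((shiftSeq^[j] y) k) / 2 ^ k)
          ≤ ∑ k ∈ Finset.range K, (ε/4) * (1/2:ℝ)^k := Finset.sum_le_sum h5
        _ = (ε/4) * ∑ k ∈ Finset.range K, (1/2:ℝ)^k := by rw [Finset.mul_sum]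
        _ ≤ (ε/4) * 2 := mul_le_mul_of_nonneg_left (sum_geometric_two_le K) (by positivity)
        _ = ε/2 := by ring
    have hle : rho (shiftSeq^[j] x) (shiftSeq^[j] y) ≤ ε := by
      calc rho (shiftSeq^[j] x) (shiftSeq^[j] y)
          ≤ _ := hb
        _ ≤ ε/2 + ε/2 := add_le_add hsumle hKtail
        _ = ε := by ring
    linarith
  have himg : φ '' A ⊆ T := by
    rintro _ ⟨x, hx, rfl⟩
    intro i _
    exact hcent (x i)
  calc A.ncard = (φ '' A).ncard := (Set.ncard_image_of_injOn hinj).symm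
    _ ≤ T.ncard := Set.ncard_le_ncard himg hTfin

lemma sSep_le_sSepShift {M : Type*} [MetricSpace M] [CompactSpace M]
    (F : M → Set M) (hne : ∀ x, (F x).Nonempty) (n : ℕ) (hn : 0 < n)
    (ε : ℝ) (hε : 0 < ε) : sSep F n ε ≤ sSepShift F n ε := by
  obtain ⟨D, hD0, hD⟩ := exists_dist_bound M
  rw [sSep, sSepShift]
  apply csSup_le_csSup (bddAbove_S2 F n ε hε)
  · exact ⟨0, ∅, Set.finite_empty, Set.empty_subset _, Set.pairwise_empty _, by simp⟩
  rintro m ⟨A, hAf, hAseg, hApair, rfl⟩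
  rcases A.eq_empty_or_nonempty with rfl | ⟨a, ha⟩
  · exact ⟨∅, Set.finite_empty, Set.empty_subset _, Set.pairwise_empty _, by simp⟩
  · set d := a ⟨0, hn⟩ with hd
    set E := fun x : Fin n → M => extSeq F hne x d with hE
    have hEinj : Set.InjOn E A := by
      intro x hx y hy hxy
      funext i
      have h1 := congrFun hxy i.val
      rw [hE] at h1
      simp only at h1
      rw [extSeq_lt F hne x d i.val i.isLt, extSeq_lt F hne y d i.val i.isLt] at h1
      simpa using h1
    refine ⟨E '' A, hAf.image _, ?_, ?_, by rw [Set.ncard_image_of_injOn hEinj]⟩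
    · rintro _ ⟨x, hx, rfl⟩
      exact extSeq_mem F hne x d (hAseg hx)
    · rintro _ ⟨x, hx, rfl⟩ _ ⟨y, hy, rfl⟩ hne'
      have hxy : x ≠ y := fun h => hne' (by rw [h])
      obtain ⟨i, hi⟩ := hApair hx hy hxy
      refine ⟨i.val, i.isLt, ?_⟩
      have h0 : (shiftSeq^[i.val] (E x)) 0 = x i := by
        rw [shift_iter, Nat.zero_add]
        exact (extSeq_lt F hne x d i.val i.isLt).trans (congrArg x (Fin.eta i i.isLt))
      have h0' : (shiftSeq^[i.val] (E y)) 0 = y i := by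
        rw [shift_iter, Nat.zero_add]
        exact (extSeq_lt F hne y d i.val i.isLt).trans (congrArg y (Fin.eta i i.isLt))
      calc ε < dist (x i) (y i) := hi
        _ = dist ((shiftSeq^[i.val] (E x)) 0) ((shiftSeq^[i.val] (E y)) 0) := by rw [h0, h0']
        _ ≤ rho (shiftSeq^[i.val] (E x)) (shiftSeq^[i.val] (E y)) := dist_le_rho D hD _ _

lemma log_nat_mono {a b : ℕ} (hab : a ≤ b) : Real.log a ≤ Real.log b := by
  rcases Nat.eq_zero_or_pos a with rfl | ha
  · rcases Nat.eq_zero_or_pos b with rfl | hb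
    · exact le_refl _
    · simp only [Nat.cast_zero, Real.log_zero]
      exact Real.log_nonneg (by exact_mod_cast hb)
  · exact Real.log_le_log (by exact_mod_cast ha) (by exact_mod_cast hab)

end Aux

/-- the topological entropy of the one-sided shift `σ_F` on `(M^F, ρ)`
is at least the topological entropy of the set-valued map `F`. -/
theorem stmt19 {M : Type*} [MetricSpace M] [CompactSpace M]
    (F : M → Set M) (hne : ∀ x, (F x).Nonempty) (hcp : ∀ x, IsCompact (F x))
    (husc : ∀ V : Set M, IsOpen V → IsOpen {x | F x ⊆ V}) :
    (⨆ (ε : ℝ) (_ : 0 < ε),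
        atTop.limsup fun n : ℕ => ((Real.log (sSep F n ε) / n : ℝ) : EReal)) ≤
      (⨆ (ε : ℝ) (_ : 0 < ε),
        atTop.limsup fun n : ℕ => ((Real.log (sSepShift F n ε) / n : ℝ) : EReal)) := by
  refine iSup₂_le fun ε hε => ?_
  refine le_iSup₂_of_le ε hε ?_
  refine Filter.limsup_le_limsup ?_
  filter_upwards [eventually_ge_atTop 1] with n hn
  have key : sSep F n ε ≤ sSepShift F n ε :=
    sSep_le_sSepShift F hne n hn ε hε
  have hlog : Real.log (sSep F n ε) ≤ Real.log (sSepShift F n ε) := log_nat_mono key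
  have hdiv : Real.log (sSep F n ε) / n ≤ Real.log (sSepShift F n ε) / n :=
    div_le_div_of_nonneg_right hlog (by exact_mod_cast Nat.zero_le n)
  exact_mod_cast EReal.coe_le_coe_iff.2 hdiv
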